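/- For every natural number r ≥ 0, the inclusion ℂ[α] → ℂ[α,β,γ] followed by the quotient map induces an isomorphism of ℂ-algebras ℂ[α]/(P_r) ≅ ℂ[α,β,γ]/(J_{r+1} + (γ, β + (−1)^{r+1}·8)), where P_r = α·∏_{j even, 2 ≤ j ≤ r} (α² + 16·j²) if r is even, and P_r = ∏_{j odd, 1 ≤ j ≤ r} (α² − 16·j²) if r is odd. -/
import Mathlib


open MvPolynomial

/-- The triple (R¹_r, R²_r, R³_r) of polynomials in ℂ[α,β,γ] (α = X 0, β = X 1, γ = X 2). -/
noncomputable def Rr : ℕ → MvPolynomial (Fin 3) ℂ × MvPolynomial (Fin 3) ℂ × MvPolynomial (Fin 3) ℂ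
  | 0 => (1, 0, 0)
  | (r + 1) =>
      (X 0 * (Rr r).1 + C ((r : ℂ) ^ 2) * (Rr r).2.1,
       (X 1 + C ((-1 : ℂ) ^ (r + 1) * 8)) * (Rr r).1 + C ((2 * r : ℂ) / (r + 1)) * (Rr r).2.2,
       X 2 * (Rr r).1)

/-- The ideal J_r = (R¹_r, R²_r, R³_r) ⊆ ℂ[α,β,γ]. -/
noncomputable def Jr (r : ℕ) : Ideal (MvPolynomial (Fin 3) ℂ) :=
  Ideal.span {(Rr r).1, (Rr r).2.1, (Rr r).2.2}


/-- The polynomial P_r ∈ ℂ[α]: P_r = α·∏_{j even, 2 ≤ j ≤ r} (α² + 16·j²) if r is even, and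
P_r = ∏_{j odd, 1 ≤ j ≤ r} (α² − 16·j²) if r is odd. -/
noncomputable def Pr (r : ℕ) : Polynomial ℂ :=
  if r % 2 = 0 then
    Polynomial.X * ∏ k ∈ Finset.range (r / 2),
      (Polynomial.X ^ 2 + Polynomial.C (16 * ((2 * (k + 1) : ℕ) : ℂ) ^ 2))
  else
    ∏ k ∈ Finset.range ((r + 1) / 2),
      (Polynomial.X ^ 2 - Polynomial.C (16 * ((2 * k + 1 : ℕ) : ℂ) ^ 2))

/-- The ideal J_{r+1} + (γ, β + (−1)^{r+1}·8) ⊆ ℂ[α,β,γ]. -/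
noncomputable def I7 (r : ℕ) : Ideal (MvPolynomial (Fin 3) ℂ) :=
  Jr (r + 1) ⊔ Ideal.span {X 2, X 1 + C ((-1 : ℂ) ^ (r + 1) * 8)}

/-! Auxiliary -/

noncomputable def psi (r : ℕ) : MvPolynomial (Fin 3) ℂ →ₐ[ℂ] Polynomial ℂ :=
  aeval ![Polynomial.X, Polynomial.C ((-1 : ℂ) ^ r * 8), 0]

noncomputable def q1 (r : ℕ) : ℕ → Polynomial ℂ
  | 0 => 1
  | 1 => Polynomial.X
  | (s + 2) => Polynomial.X * q1 r (s + 1)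
      + Polynomial.C ((((s : ℂ)) + 1) ^ 2 * ((-1 : ℂ) ^ r * 8 + (-1 : ℂ) ^ (s + 1) * 8)) * q1 r s

noncomputable def q2 (r : ℕ) : ℕ → Polynomial ℂ
  | 0 => 0
  | (s + 1) => Polynomial.C ((-1 : ℂ) ^ r * 8 + (-1 : ℂ) ^ (s + 1) * 8) * q1 r s

lemma psi_X0 (r : ℕ) : psi r (X 0) = Polynomial.X := by simp [psi]
lemma psi_X1 (r : ℕ) : psi r (X 1) = Polynomial.C ((-1 : ℂ) ^ r * 8) := by simp [psi]
lemma psi_X2 (r : ℕ) : psi r (X 2) = 0 := by simp [psi]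

lemma psi_Rr (r : ℕ) : ∀ s, psi r (Rr s).1 = q1 r s ∧ psi r (Rr s).2.1 = q2 r s ∧
    psi r (Rr s).2.2 = 0 := by
  intro s
  induction s with
  | zero => simp [Rr, q1, q2]
  | succ s ih =>
    obtain ⟨h1, h2, h3⟩ := ih
    refine ⟨?_, ?_, ?_⟩
    · show psi r (X 0 * (Rr s).1 + C ((s : ℂ) ^ 2) * (Rr s).2.1) = _
      rw [map_add, map_mul, map_mul, psi_X0, h1, h2, algHom_C, Polynomial.algebraMap_eq]
      match s with
      | 0 => simp [q1, q2]
      | (t + 1) =>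
        show _ = q1 r (t + 2)
        rw [q1, q2]
        simp only [Polynomial.C_add, Polynomial.C_mul, Polynomial.C_pow, Polynomial.C_neg,
          Polynomial.C_1, map_natCast, map_ofNat]
        push_cast
        ring
    · show psi r ((X 1 + C ((-1 : ℂ) ^ (s + 1) * 8)) * (Rr s).1
          + C ((2 * s : ℂ) / (s + 1)) * (Rr s).2.2) = _
      rw [q2]
      simp only [map_add, map_mul, psi_X1, h1, h3, mul_zero, add_zero, algHom_C,
        Polynomial.algebraMap_eq, Polynomial.C_add, Polynomial.C_mul, Polynomial.C_pow,
        Polynomial.C_neg, Polynomial.C_1, map_natCast, map_ofNat]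
    · show psi r (X 2 * (Rr s).1) = 0
      rw [map_mul, psi_X2, zero_mul]

lemma q1_even (r : ℕ) (hr : r % 2 = 0) : ∀ k,
    q1 r (2 * k + 1) = Polynomial.X * ∏ j ∈ Finset.range k,
      (Polynomial.X ^ 2 + Polynomial.C (16 * ((2 * (j + 1) : ℕ) : ℂ) ^ 2)) ∧
    q1 r (2 * k + 2) = Polynomial.X ^ 2 * ∏ j ∈ Finset.range k,
      (Polynomial.X ^ 2 + Polynomial.C (16 * ((2 * (j + 1) : ℕ) : ℂ) ^ 2)) := by
  have hneg : (-1 : ℂ) ^ r = 1 := (Nat.even_iff.mpr hr).neg_one_pow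
  intro k
  induction k with
  | zero =>
    constructor
    · simp [q1]
    · show q1 r (0 + 2) = _
      rw [q1]
      simp [q1, hneg, sq]
  | succ k ih =>
    obtain ⟨h1, h2⟩ := ih
    set A := ∏ j ∈ Finset.range k,
      (Polynomial.X ^ 2 + Polynomial.C (16 * ((2 * (j + 1) : ℕ) : ℂ) ^ 2)) with hA
    have hprod : ∏ j ∈ Finset.range (k + 1),
        (Polynomial.X ^ 2 + Polynomial.C (16 * ((2 * (j + 1) : ℕ) : ℂ) ^ 2)) =
        A * (Polynomial.X ^ 2 + Polynomial.C (16 * ((2 * (k + 1) : ℕ) : ℂ) ^ 2)) :=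
      Finset.prod_range_succ _ _
    have e1 : 2 * (k + 1) + 1 = (2 * k + 1) + 2 := by ring
    have hpe : (-1 : ℂ) ^ (2 * k + 1 + 1) = 1 := Even.neg_one_pow ⟨k + 1, by ring⟩
    have hpo : (-1 : ℂ) ^ (2 * k + 2 + 1) = -1 := Odd.neg_one_pow ⟨k + 1, by ring⟩
    have hc1 : (((2 * k + 1 : ℕ) : ℂ) + 1) = ((2 * (k + 1) : ℕ) : ℂ) := by push_cast; ring
    have step1 : q1 r (2 * (k + 1) + 1) = Polynomial.X * ∏ j ∈ Finset.range (k + 1),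
        (Polynomial.X ^ 2 + Polynomial.C (16 * ((2 * (j + 1) : ℕ) : ℂ) ^ 2)) := by
      rw [e1, q1, h1, h2, hprod, hneg, hpe, hc1]
      simp only [Polynomial.C_add, Polynomial.C_mul, Polynomial.C_pow, Polynomial.C_neg,
        Polynomial.C_1, map_natCast, map_ofNat]
      ring
    refine ⟨step1, ?_⟩
    have e3 : 2 * (k + 1) + 2 = (2 * k + 2) + 2 := by ring
    have e4 : (2 * k + 2) + 1 = 2 * (k + 1) + 1 := by ring
    rw [e3, q1, hneg, hpo, e4, step1, hprod]
    have hz : ((((2 * k + 2 : ℕ) : ℂ)) + 1) ^ 2 * ((1 : ℂ) * 8 + -1 * 8) = 0 := by ring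
    rw [hz, map_zero, zero_mul, add_zero]
    ring

lemma q1_odd (r : ℕ) (hr : r % 2 = 1) : ∀ k,
    q1 r (2 * k) = (∏ j ∈ Finset.range k,
      (Polynomial.X ^ 2 - Polynomial.C (16 * ((2 * j + 1 : ℕ) : ℂ) ^ 2))) ∧
    q1 r (2 * k + 1) = Polynomial.X * ∏ j ∈ Finset.range k,
      (Polynomial.X ^ 2 - Polynomial.C (16 * ((2 * j + 1 : ℕ) : ℂ) ^ 2)) := by
  have hneg : (-1 : ℂ) ^ r = -1 := (Nat.odd_iff.mpr hr).neg_one_pow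
  intro k
  induction k with
  | zero => simp [q1]
  | succ k ih =>
    obtain ⟨h1, h2⟩ := ih
    set B := ∏ j ∈ Finset.range k,
      (Polynomial.X ^ 2 - Polynomial.C (16 * ((2 * j + 1 : ℕ) : ℂ) ^ 2)) with hB
    have hprod : ∏ j ∈ Finset.range (k + 1),
        (Polynomial.X ^ 2 - Polynomial.C (16 * ((2 * j + 1 : ℕ) : ℂ) ^ 2)) =
        B * (Polynomial.X ^ 2 - Polynomial.C (16 * ((2 * k + 1 : ℕ) : ℂ) ^ 2)) :=
      Finset.prod_range_succ _ _
    have hpo : (-1 : ℂ) ^ (2 * k + 1) = -1 := Odd.neg_one_pow ⟨k, rfl⟩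
    have hpe : (-1 : ℂ) ^ (2 * k + 1 + 1) = 1 := Even.neg_one_pow ⟨k + 1, by ring⟩
    have hc1 : (((2 * k : ℕ) : ℂ) + 1) = ((2 * k + 1 : ℕ) : ℂ) := by push_cast; ring
    have step1 : q1 r (2 * (k + 1)) = ∏ j ∈ Finset.range (k + 1),
        (Polynomial.X ^ 2 - Polynomial.C (16 * ((2 * j + 1 : ℕ) : ℂ) ^ 2)) := by
      have e1 : 2 * (k + 1) = (2 * k) + 2 := by ring
      rw [e1, q1, hneg, hpo, h1, h2, hprod, hc1]
      simp only [Polynomial.C_add, Polynomial.C_mul, Polynomial.C_pow, Polynomial.C_neg,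
        Polynomial.C_1, map_natCast, map_ofNat]
      ring
    refine ⟨step1, ?_⟩
    have e2 : 2 * (k + 1) + 1 = (2 * k + 1) + 2 := by ring
    have e3 : 2 * k + 1 + 1 = 2 * (k + 1) := by ring
    rw [e2, q1, hneg, hpe, e3, step1]
    have hz : ((((2 * k + 1 : ℕ) : ℂ)) + 1) ^ 2 * ((-1 : ℂ) * 8 + 1 * 8) = 0 := by ring
    rw [hz, map_zero, zero_mul, add_zero]

lemma q1_eq_Pr (r : ℕ) : q1 r (r + 1) = Pr r := by
  rcases Nat.even_or_odd r with he | ho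
  · have hr : r % 2 = 0 := Nat.even_iff.mp he
    have hk : r = 2 * (r / 2) := by omega
    rw [Pr, if_pos hr]
    have := (q1_even r hr (r / 2)).1
    rw [← hk] at this
    exact this
  · have hr : r % 2 = 1 := Nat.odd_iff.mp ho
    have hk : r + 1 = 2 * ((r + 1) / 2) := by omega
    rw [Pr, if_neg (by omega)]
    have := (q1_odd r hr ((r + 1) / 2)).1
    rw [← hk] at this
    exact this

lemma psi_aeval (r : ℕ) (p : Polynomial ℂ) :
    psi r (Polynomial.aeval (X 0 : MvPolynomial (Fin 3) ℂ) p) = p := by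
  have : (psi r).comp (Polynomial.aeval (X 0 : MvPolynomial (Fin 3) ℂ)) =
      AlgHom.id ℂ (Polynomial ℂ) := by
    apply Polynomial.algHom_ext
    simp [psi]
  exact congrFun (congrArg DFunLike.coe this) p

lemma X2_mem (r : ℕ) : (X 2 : MvPolynomial (Fin 3) ℂ) ∈ I7 r :=
  Ideal.mem_sup_right (Ideal.subset_span (by simp))

lemma X1_mem (r : ℕ) : (X 1 + C ((-1 : ℂ) ^ (r + 1) * 8) : MvPolynomial (Fin 3) ℂ) ∈ I7 r :=
  Ideal.mem_sup_right (Ideal.subset_span (by simp))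

lemma R1_mem (r : ℕ) : (Rr (r + 1)).1 ∈ I7 r :=
  Ideal.mem_sup_left (Ideal.subset_span (by simp [Jr]))

lemma mk_sigma (r : ℕ) (q : MvPolynomial (Fin 3) ℂ) :
    Ideal.Quotient.mk (I7 r) (Polynomial.aeval (X 0 : MvPolynomial (Fin 3) ℂ) (psi r q)) =
      Ideal.Quotient.mk (I7 r) q := by
  have : (Ideal.Quotient.mkₐ ℂ (I7 r)).comp
      ((Polynomial.aeval (X 0 : MvPolynomial (Fin 3) ℂ)).comp (psi r)) =
      Ideal.Quotient.mkₐ ℂ (I7 r) := by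
    apply MvPolynomial.algHom_ext
    intro i
    fin_cases i
    · simp [psi]
    · show Ideal.Quotient.mkₐ ℂ (I7 r) (Polynomial.aeval _ (psi r (X 1))) = _
      rw [psi_X1, Polynomial.aeval_C]
      simp only [Ideal.Quotient.mkₐ_eq_mk, MvPolynomial.algebraMap_eq]
      rw [Ideal.Quotient.eq]
      have hc : ((-1 : ℂ) ^ (r + 1) * 8) = -((-1 : ℂ) ^ r * 8) := by rw [pow_succ]; ring
      have hmem : (C ((-1 : ℂ) ^ r * 8) : MvPolynomial (Fin 3) ℂ) - X 1 =
          -(X 1 + C ((-1 : ℂ) ^ (r + 1) * 8)) := by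
        rw [hc, map_neg]; ring
      show (C ((-1 : ℂ) ^ r * 8) : MvPolynomial (Fin 3) ℂ) - X 1 ∈ I7 r
      rw [hmem]
      exact neg_mem (X1_mem r)
    · show Ideal.Quotient.mkₐ ℂ (I7 r) (Polynomial.aeval _ (psi r (X 2))) = _
      rw [psi_X2, map_zero, map_zero]
      exact ((Ideal.Quotient.eq_zero_iff_mem).mpr (X2_mem r)).symm
  exact congrFun (congrArg DFunLike.coe this) q


/-- For every r ≥ 0, the inclusion ℂ[α] → ℂ[α,β,γ] (sending α to α) followed by the quotient
map induces an isomorphism of ℂ-algebras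
ℂ[α]/(P_r) ≅ ℂ[α,β,γ]/(J_{r+1} + (γ, β + (−1)^{r+1}·8)). -/
theorem stmt7 (r : ℕ) :
    ∃ e : (Polynomial ℂ ⧸ Ideal.span {Pr r}) ≃ₐ[ℂ] (MvPolynomial (Fin 3) ℂ ⧸ I7 r),
      ∀ p : Polynomial ℂ,
        e (Ideal.Quotient.mk (Ideal.span {Pr r}) p) =
          Ideal.Quotient.mk (I7 r) (Polynomial.aeval (X 0 : MvPolynomial (Fin 3) ℂ) p) := by
  classical
  set f : Polynomial ℂ →ₐ[ℂ] MvPolynomial (Fin 3) ℂ ⧸ I7 r :=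
    (Ideal.Quotient.mkₐ ℂ (I7 r)).comp (Polynomial.aeval (X 0 : MvPolynomial (Fin 3) ℂ)) with hf
  have hfapp : ∀ p, f p = Ideal.Quotient.mk (I7 r)
      (Polynomial.aeval (X 0 : MvPolynomial (Fin 3) ℂ) p) := fun p => rfl
  -- f (Pr r) = 0
  have hPr : f (Pr r) = 0 := by
    rw [hfapp, ← q1_eq_Pr, ← (psi_Rr r (r + 1)).1, mk_sigma, Ideal.Quotient.eq_zero_iff_mem]
    exact R1_mem r
  -- kernel ≤ span
  have hker : ∀ p : Polynomial ℂ, f p = 0 → p ∈ Ideal.span {Pr r} := by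
    intro p hp
    rw [hfapp, Ideal.Quotient.eq_zero_iff_mem] at hp
    have h1 : p = psi r (Polynomial.aeval (X 0 : MvPolynomial (Fin 3) ℂ) p) :=
      (psi_aeval r p).symm
    have h2 : Ideal.map (psi r).toRingHom (I7 r) ≤ Ideal.span {Pr r} := by
      rw [I7, Jr, ← Ideal.span_union, Ideal.map_span, Ideal.span_le]
      rintro x ⟨y, hy, rfl⟩
      simp only [Set.union_insert, Set.union_singleton, Set.mem_insert_iff,
        Set.mem_singleton_iff] at hy
      have hq1 : (psi r).toRingHom (Rr (r + 1)).1 = Pr r := by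
        rw [← q1_eq_Pr]; exact (psi_Rr r (r + 1)).1
      have hq2 : (psi r).toRingHom (Rr (r + 1)).2.1 = 0 := by
        have := (psi_Rr r (r + 1)).2.1
        rw [show (psi r).toRingHom (Rr (r + 1)).2.1 = psi r (Rr (r + 1)).2.1 from rfl, this, q2]
        have hz : (-1 : ℂ) ^ r * 8 + (-1 : ℂ) ^ (r + 1) * 8 = 0 := by rw [pow_succ]; ring
        rw [hz, map_zero, zero_mul]
      have hq3 : (psi r).toRingHom (Rr (r + 1)).2.2 = 0 := (psi_Rr r (r + 1)).2.2
      have hX2 : (psi r).toRingHom (X 2 : MvPolynomial (Fin 3) ℂ) = 0 := psi_X2 r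
      have hX1 : (psi r).toRingHom (X 1 + C ((-1 : ℂ) ^ (r + 1) * 8) : MvPolynomial (Fin 3) ℂ)
          = 0 := by
        show psi r _ = 0
        rw [map_add, psi_X1, algHom_C, Polynomial.algebraMap_eq]
        have hc : ((-1 : ℂ) ^ (r + 1) * 8) = -((-1 : ℂ) ^ r * 8) := by rw [pow_succ]; ring
        rw [hc, map_neg, add_neg_cancel]
      rcases hy with h | h | h | h | h <;> subst h <;>
        simp only [hq1, hq2, hq3, hX2, hX1] <;>
        first
          | exact Ideal.subset_span rfl
          | exact Ideal.zero_mem _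
    have h3 : psi r (Polynomial.aeval (X 0 : MvPolynomial (Fin 3) ℂ) p) ∈
        Ideal.map (psi r).toRingHom (I7 r) := Ideal.mem_map_of_mem _ hp
    rw [h1]
    exact h2 h3
  -- lift
  have hzero : ∀ a ∈ Ideal.span {Pr r}, f a = 0 := by
    intro a ha
    rw [Ideal.mem_span_singleton] at ha
    obtain ⟨c, rfl⟩ := ha
    rw [map_mul, hPr, zero_mul]
  set g : (Polynomial ℂ ⧸ Ideal.span {Pr r}) →ₐ[ℂ] MvPolynomial (Fin 3) ℂ ⧸ I7 r :=
    Ideal.Quotient.liftₐ (Ideal.span {Pr r}) f hzero with hg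
  have hgmk : ∀ p, g (Ideal.Quotient.mk (Ideal.span {Pr r}) p) = f p := fun p =>
    Ideal.Quotient.liftₐ_apply _ _ _ _
  have hsurj : Function.Surjective g := by
    intro y
    obtain ⟨q, rfl⟩ := Ideal.Quotient.mk_surjective y
    refine ⟨Ideal.Quotient.mk _ (psi r q), ?_⟩
    rw [hgmk, hfapp, mk_sigma]
  have hinj : Function.Injective g := by
    rw [injective_iff_map_eq_zero]
    intro x hx
    obtain ⟨p, rfl⟩ := Ideal.Quotient.mk_surjective x
    rw [hgmk] at hx
    rw [Ideal.Quotient.eq_zero_iff_mem]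
    exact hker p hx
  exact ⟨AlgEquiv.ofBijective g ⟨hinj, hsurj⟩, fun p => hgmk p⟩
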